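/- Let (Ω, η) be an almost cosymplectic structure on a skew algebroid (A, ρ, [.,.]) with Reeb section ξ and fundamental bivector Π. For a, b, c ∈ Γ(A) set α = ♭_{Ω,η}(a), β = ♭_{Ω,η}(b), γ = ♭_{Ω,η}(c). Then: (1) ((1/2)[Π,Π] − ξ∧Π)(α,β,γ) = (d_ρΩ + η∧(d_ρη − Ω − L^ρ_ξΩ))(a,b,c); (2) L^ρ_ξΠ(α,β) = (η∧L^ρ_ξη − L^ρ_ξΩ)(a,b). -/

import Mathlib

/-- Algebraic model of a skew algebroid over a base manifold: `R` plays the role of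
the ring of smooth functions, `G` the module of sections of the anchored bundle,
`bracket` the skew-symmetric bracket satisfying the Leibniz rule, and `anchor`
gives the action of sections on functions by derivations. -/
structure SkewAlgebroid (R : Type*) [CommRing R] (G : Type*)
    [AddCommGroup G] [Module R G] where
  bracket : G → G → G
  anchor : G → R → R
  bracket_add_left : ∀ a b c, bracket (a + b) c = bracket a c + bracket b c
  bracket_skew : ∀ a b, bracket a b = - bracket b a
  anchor_add : ∀ a b φ, anchor (a + b) φ = anchor a φ + anchor b φ
  anchor_smul : ∀ (φ : R) a ψ, anchor (φ • a) ψ = φ * anchor a ψ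
  anchor_map_add : ∀ a φ ψ, anchor a (φ + ψ) = anchor a φ + anchor a ψ
  anchor_map_mul : ∀ a φ ψ, anchor a (φ * ψ) = φ * anchor a ψ + ψ * anchor a φ
  leibniz : ∀ a (φ : R) b, bracket a (φ • b) = φ • bracket a b + anchor a φ • b

namespace SkewAlgebroid

variable {R : Type*} [CommRing R] {G : Type*} [AddCommGroup G] [Module R G]

/-- The bivector field associated to a sharp map `♯ : A* → A`: `Π(α,β) = β(♯α)`. -/
def biv (sharp : (G →ₗ[R] R) → G) (α β : G →ₗ[R] R) : R := β (sharp α)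

/-- `♯_{Π,ξ}(α) = ♯_Π(α) + α(ξ)ξ`. -/
def sharpJ (sharp : (G →ₗ[R] R) → G) (ξ : G) (α : G →ₗ[R] R) : G := sharp α + α ξ • ξ

/-- `(ξ ∧ Π)(α,β,γ)`. -/
def wedgeVB (ξ : G) (sharp : (G →ₗ[R] R) → G) (α β γ : G →ₗ[R] R) : R :=
  α ξ * biv sharp β γ - β ξ * biv sharp α γ + γ ξ * biv sharp α β

variable (S : SkewAlgebroid R G)

lemma bracket_add_right (a b c : G) :
    S.bracket a (b + c) = S.bracket a b + S.bracket a c := by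
  rw [S.bracket_skew a (b + c), S.bracket_add_left, S.bracket_skew b a, S.bracket_skew c a]
  abel

/-- The Lie `A`-derivative of a 1-form along a section. -/
def lieDeriv (a : G) (α : G →ₗ[R] R) : G →ₗ[R] R where
  toFun b := S.anchor a (α b) - α (S.bracket a b)
  map_add' b c := by
    rw [map_add, S.anchor_map_add, S.bracket_add_right, map_add]; ring
  map_smul' φ b := by
    rw [map_smul, smul_eq_mul, S.anchor_map_mul, S.leibniz, map_add, map_smul, map_smul,
      smul_eq_mul, smul_eq_mul, RingHom.id_apply, smul_eq_mul]
    ring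

/-- The exterior `A`-differential of a function, as a 1-form. -/
def dform (φ : R) : G →ₗ[R] R where
  toFun a := S.anchor a φ
  map_add' a b := S.anchor_add a b φ
  map_smul' c a := by rw [S.anchor_smul]; rfl

/-- The exterior `A`-differential of a 1-form. -/
def dOne (η : G →ₗ[R] R) (a b : G) : R :=
  S.anchor a (η b) - S.anchor b (η a) - η (S.bracket a b)

/-- The exterior `A`-differential of a 2-form. -/
def dTwo (Ω : G →ₗ[R] G →ₗ[R] R) (a b c : G) : R :=
  S.anchor a (Ω b c) - S.anchor b (Ω a c) + S.anchor c (Ω a b)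
    - Ω (S.bracket a b) c + Ω (S.bracket a c) b - Ω (S.bracket b c) a

/-- The Lie `A`-derivative of a 2-form along a section. -/
def lieTwo (ξ : G) (Ω : G →ₗ[R] G →ₗ[R] R) (a b : G) : R :=
  S.anchor ξ (Ω a b) - Ω (S.bracket ξ a) b - Ω a (S.bracket ξ b)

/-- The Koszul bracket of 1-forms associated with the bivector field given by `sharp`:
`[α,β]_Π = L_{♯α}β − L_{♯β}α − d_ρ(Π(α,β))`. -/
def koszul (sharp : (G →ₗ[R] R) → G) (α β : G →ₗ[R] R) : G →ₗ[R] R :=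
  S.lieDeriv (sharp α) β - S.lieDeriv (sharp β) α - S.dform (biv sharp α β)

/-- The Schouten–Nijenhuis bracket `[Π,Π]`, defined (as in the contravariant calculus)
by `[Π,Π] = −d_{ρ_Π}Π` via the structure `(ρ_Π, [.,.]_Π)` on the dual. -/
def schouten (sharp : (G →ₗ[R] R) → G) (α β γ : G →ₗ[R] R) : R :=
  -(S.anchor (sharp α) (biv sharp β γ) - S.anchor (sharp β) (biv sharp α γ)
      + S.anchor (sharp γ) (biv sharp α β)
      - biv sharp (S.koszul sharp α β) γ + biv sharp (S.koszul sharp α γ) β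
      - biv sharp (S.koszul sharp β γ) α)

/-- The Lie `A`-derivative `L^ρ_ξ Π` of the bivector field. -/
def lieBiv (ξ : G) (sharp : (G →ₗ[R] R) → G) (α β : G →ₗ[R] R) : R :=
  S.anchor ξ (biv sharp α β) - biv sharp (S.lieDeriv ξ α) β - biv sharp α (S.lieDeriv ξ β)

/-- The deformed dual bracket `[α,β]^λ_{Π,ξ}`. -/
def bracketJ (sharp : (G →ₗ[R] R) → G) (ξ : G) (lam : G →ₗ[R] R) (α β : G →ₗ[R] R) :
    G →ₗ[R] R :=
  S.koszul sharp α β + α ξ • (S.lieDeriv ξ β - β) - β ξ • (S.lieDeriv ξ α - α)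
    - biv sharp α β • lam

/-- The anchor is a bracket morphism (almost Lie algebroid condition). -/
def IsAlmostLie : Prop := ∀ a b φ,
  S.anchor (S.bracket a b) φ = S.anchor a (S.anchor b φ) - S.anchor b (S.anchor a φ)

/-- The Jacobi identity for the bracket (Lie algebroid condition). -/
def IsJacobi : Prop := ∀ a b c,
  S.bracket (S.bracket a b) c + S.bracket (S.bracket b c) a + S.bracket (S.bracket c a) b = 0

end SkewAlgebroid

namespace SkewAlgebroid
variable {R : Type*} [CommRing R] {G : Type*} [AddCommGroup G] [Module R G]
variable (S : SkewAlgebroid R G)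

lemma anchor_map_one (a : G) : S.anchor a 1 = 0 := by
  have h := S.anchor_map_mul a 1 1
  simp at h
  exact h

lemma anchor_map_zero (a : G) : S.anchor a 0 = 0 := by
  have h := S.anchor_map_add a 0 0
  simp at h; exact h

lemma anchor_map_neg (a : G) (φ : R) : S.anchor a (-φ) = - S.anchor a φ := by
  have h := S.anchor_map_add a φ (-φ)
  simp [S.anchor_map_zero] at h
  linear_combination -h

lemma anchor_map_sub (a : G) (φ ψ : R) : S.anchor a (φ - ψ) = S.anchor a φ - S.anchor a ψ := by
  rw [sub_eq_add_neg, S.anchor_map_add, S.anchor_map_neg]; ring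

lemma anchor_neg_left (a : G) (φ : R) : S.anchor (-a) φ = - S.anchor a φ := by
  have : (-a : G) = (-1 : R) • a := by simp
  rw [this, S.anchor_smul]; ring

lemma anchor_sub_left (a b : G) (φ : R) : S.anchor (a - b) φ = S.anchor a φ - S.anchor b φ := by
  rw [sub_eq_add_neg, S.anchor_add, S.anchor_neg_left]; ring

lemma bracket_smul_left (φ : R) (a b : G) :
    S.bracket (φ • a) b = φ • S.bracket a b - S.anchor b φ • a := by
  rw [S.bracket_skew, S.leibniz, S.bracket_skew b a]
  module

lemma bracket_neg_left (a b : G) : S.bracket (-a) b = - S.bracket a b := by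
  have : (-a : G) = (-1 : R) • a := by simp
  rw [this, S.bracket_smul_left, S.anchor_map_neg, S.anchor_map_one]
  module

lemma bracket_neg_right (a b : G) : S.bracket a (-b) = - S.bracket a b := by
  rw [S.bracket_skew, S.bracket_neg_left, S.bracket_skew b a]; abel

lemma bracket_sub_left (a b c : G) :
    S.bracket (a - b) c = S.bracket a c - S.bracket b c := by
  rw [sub_eq_add_neg, S.bracket_add_left, S.bracket_neg_left]; abel

lemma bracket_sub_right (a b c : G) :
    S.bracket a (b - c) = S.bracket a b - S.bracket a c := by
  rw [sub_eq_add_neg, S.bracket_add_right, S.bracket_neg_right]; abel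

lemma algebra_half_two [Algebra ℝ R] : (algebraMap ℝ R) (1/2) * 2 = 1 := by
  rw [show (2:R) = algebraMap ℝ R 2 from (map_ofNat (algebraMap ℝ R) 2).symm, ← map_mul]
  norm_num

lemma half_cancel [Algebra ℝ R] (r : R) (h : r + r = 0) : r = 0 := by
  have h2 : (2 : R) * r = 0 := by rw [two_mul]; exact h
  calc r = ((algebraMap ℝ R) (1/2) * 2) * r := by rw [algebra_half_two, one_mul]
  _ = (algebraMap ℝ R) (1/2) * ((2:R) * r) := by ring
  _ = 0 := by rw [h2, mul_zero]

lemma half_cancelG [Algebra ℝ R] (x : G) (h : x + x = 0) : x = 0 := by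
  have h2 : (2 : R) • x = 0 := by rw [two_smul]; exact h
  calc x = ((algebraMap ℝ R) (1/2) * 2) • x := by rw [algebra_half_two, one_smul]
  _ = (algebraMap ℝ R) (1/2) • ((2:R) • x) := by rw [mul_smul]
  _ = 0 := by rw [h2, smul_zero]

lemma half_smul_two [Algebra ℝ R] (r : R) : (1/2 : ℝ) • ((2:R) * r) = r := by
  rw [Algebra.smul_def, ← mul_assoc, algebra_half_two, one_mul]

lemma lieDeriv_apply (a : G) (α : G →ₗ[R] R) (b : G) :
    S.lieDeriv a α b = S.anchor a (α b) - α (S.bracket a b) := rfl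

lemma dform_apply (φ : R) (a : G) : S.dform φ a = S.anchor a φ := rfl

end SkewAlgebroid

open SkewAlgebroid

variable {R : Type*} [CommRing R] {G : Type*} [AddCommGroup G] [Module R G]

/-- identities for the fundamental pair `(Π,ξ)` of an almost
cosymplectic structure `(Ω,η)`, evaluated at `α = ♭_{Ω,η}a`, `β = ♭_{Ω,η}b`,
`γ = ♭_{Ω,η}c`:
(1) `((1/2)[Π,Π] − ξ∧Π)(α,β,γ) = (d_ρΩ + η∧(d_ρη − Ω − L_ξΩ))(a,b,c)`;
(2) `L_ξΠ(α,β) = (η∧L_ξη − L_ξΩ)(a,b)`. -/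
theorem cosymplectic_fundamental_identities [Algebra ℝ R]
    (S : SkewAlgebroid R G) (Ω : G →ₗ[R] G →ₗ[R] R)
    (hΩskew : ∀ a b : G, Ω a b = - Ω b a)
    (η : G →ₗ[R] R) (ξ : G)
    (hξΩ : ∀ a : G, Ω ξ a = 0) (hηξ : η ξ = 1)
    (e : G ≃ₗ[R] (G →ₗ[R] R))
    (he : ∀ a b : G, e a b = -(Ω a b) + η a * η b)
    (sP : (G →ₗ[R] R) → G)
    (hsP : ∀ α β : G →ₗ[R] R, β (sP α) = Ω (e.symm α) (e.symm β)) :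
    (∀ a b c : G,
        (1/2 : ℝ) • S.schouten sP (e a) (e b) (e c) - wedgeVB ξ sP (e a) (e b) (e c)
          = S.dTwo Ω a b c
            + (η a * (S.dOne η b c - Ω b c - S.lieTwo ξ Ω b c)
              - η b * (S.dOne η a c - Ω a c - S.lieTwo ξ Ω a c)
              + η c * (S.dOne η a b - Ω a b - S.lieTwo ξ Ω a b)))
    ∧ (∀ a b : G,
        S.lieBiv ξ sP (e a) (e b)
          = (η a * S.lieDeriv ξ η b - η b * S.lieDeriv ξ η a) - S.lieTwo ξ Ω a b) := by
  have hΩξ' : ∀ x : G, Ω x ξ = 0 := fun x => by rw [hΩskew, hξΩ, neg_zero]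
  have hΩself : ∀ x : G, Ω x x = 0 := fun x =>
    half_cancel (Ω x x) (by linear_combination hΩskew x x)
  have hbrξξ : S.bracket ξ ξ = 0 :=
    half_cancelG (R := R) (S.bracket ξ ξ) (by nth_rewrite 2 [S.bracket_skew ξ ξ]; exact add_neg_cancel _)
  have heval : ∀ u x : G, (e u) (x - η x • ξ) = Ω x u := by
    intro u x
    rw [map_sub, map_smul, he, he, hηξ, hΩξ', smul_eq_mul]
    rw [hΩskew u x]; ring
  have hsPe : ∀ x : G, sP (e x) = x - η x • ξ := by
    intro x
    have key : ∀ y : G, (e y) (sP (e x) - (x - η x • ξ)) = 0 := by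
      intro y
      rw [map_sub, heval, hsP, e.symm_apply_apply, e.symm_apply_apply, hΩskew x y]
      ring
    set z := sP (e x) - (x - η x • ξ) with hzdef
    have hηz : η z = 0 := by
      have := key ξ
      rw [he, hξΩ, hηξ] at this
      linear_combination this
    have hΩz : ∀ y : G, Ω y z = 0 := by
      intro y
      have := key y
      rw [he, hηz] at this
      linear_combination -this
    have hez : e z = 0 := by
      apply LinearMap.ext
      intro w
      rw [he, hηz, hΩskew, hΩz]
      simp
    have : z = 0 := by
      apply e.injective
      rw [hez, map_zero]
    exact sub_eq_zero.mp this
  have hbiv2 : ∀ (α : G →ₗ[R] R) (x : G), biv sP α (e x) = - α (x - η x • ξ) := by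
    intro α x
    rw [biv, hsP, e.symm_apply_apply, hΩskew]
    conv_rhs => rw [← e.apply_symm_apply α]
    rw [heval]
  have hbivee : ∀ x y : G, biv sP (e x) (e y) = Ω x y := by
    intro x y
    rw [hbiv2, heval]
    linear_combination - hΩskew y x
  have part2 : ∀ a b : G,
      S.lieBiv ξ sP (e a) (e b)
        = (η a * S.lieDeriv ξ η b - η b * S.lieDeriv ξ η a) - S.lieTwo ξ Ω a b := by
    intro a b
    rw [lieBiv, hbivee, hbiv2]
    rw [show biv sP (e a) (S.lieDeriv ξ (e b)) = (S.lieDeriv ξ (e b)) (sP (e a)) from rfl, hsPe]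
    simp only [S.lieDeriv_apply, lieTwo, S.bracket_sub_right, S.leibniz, hbrξξ, map_sub, map_smul,
      he, S.anchor_map_sub, S.anchor_map_add, S.anchor_map_mul, smul_eq_mul, hηξ, hΩξ', hξΩ,
      S.anchor_map_one, smul_zero, mul_one, mul_zero, map_add, S.anchor_map_neg, S.anchor_map_zero,
      zero_sub, sub_zero, zero_add, add_zero, neg_neg, mul_neg, neg_mul]
    simp only [hΩskew b a, hΩskew b (S.bracket ξ a), S.anchor_map_neg]
    ring
  have part1 : ∀ a b c : G,
      (1/2 : ℝ) • S.schouten sP (e a) (e b) (e c) - wedgeVB ξ sP (e a) (e b) (e c)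
        = S.dTwo Ω a b c
          + (η a * (S.dOne η b c - Ω b c - S.lieTwo ξ Ω b c)
            - η b * (S.dOne η a c - Ω a c - S.lieTwo ξ Ω a c)
            + η c * (S.dOne η a b - Ω a b - S.lieTwo ξ Ω a b)) := by
    intro a b c
    have hS : S.schouten sP (e a) (e b) (e c)
        = (2:R) * (S.dTwo Ω a b c
          + (η a * (S.dOne η b c - Ω b c - S.lieTwo ξ Ω b c)
            - η b * (S.dOne η a c - Ω a c - S.lieTwo ξ Ω a c)
            + η c * (S.dOne η a b - Ω a b - S.lieTwo ξ Ω a b))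
          + wedgeVB ξ sP (e a) (e b) (e c)) := by
      simp only [schouten, koszul, wedgeVB, dTwo, dOne, lieTwo, hbivee, hbiv2, hsPe,
        LinearMap.sub_apply, S.lieDeriv_apply, S.dform_apply,
        S.bracket_sub_right, S.bracket_sub_left, S.leibniz, S.bracket_smul_left, hbrξξ,
        map_sub, map_smul, map_add, map_neg, he,
        S.anchor_sub_left, S.anchor_add, S.anchor_smul,
        S.anchor_map_sub, S.anchor_map_add, S.anchor_map_mul, S.anchor_map_neg,
        S.anchor_map_one, S.anchor_map_zero,
        smul_eq_mul, hηξ, hΩξ', hξΩ, hΩself,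
        smul_zero, mul_one, mul_zero, zero_mul, one_mul,
        zero_sub, sub_zero, zero_add, add_zero, neg_neg, mul_neg, neg_mul, sub_self]
      simp only [hΩskew b a, hΩskew c a, hΩskew c b,
        S.bracket_skew b a, S.bracket_skew c a, S.bracket_skew c b,
        S.bracket_skew a ξ, S.bracket_skew b ξ, S.bracket_skew c ξ,
        map_neg, S.anchor_map_neg, LinearMap.neg_apply,
        hΩskew a (S.bracket ξ b), hΩskew a (S.bracket ξ c),
        hΩskew b (S.bracket ξ a), hΩskew b (S.bracket ξ c),
        hΩskew c (S.bracket ξ a), hΩskew c (S.bracket ξ b),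
        hΩskew a (S.bracket b c), hΩskew b (S.bracket a c), hΩskew c (S.bracket a b),
        neg_neg, mul_neg, neg_mul]
      ring
    rw [hS, half_smul_two]
    ring
  exact ⟨part1, part2⟩
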